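/- Let C ⊆ ℝⁿ be a nonempty closed convex set and x, y ∈ C. Then N_C(x) ⊆ N_C(y) if and only if G_ex(y) ⊆ G_ex(x), where G_ex denotes the minimal exposed face generated by a point. -/

import Mathlib

open scoped RealInnerProductSpace

/-- Normal cone of a convex set at a point. -/
noncomputable def NCone {n : ℕ} (C : Set (EuclideanSpace ℝ (Fin n)))
    (x : EuclideanSpace ℝ (Fin n)) : Set (EuclideanSpace ℝ (Fin n)) :=
  {v | ∀ z ∈ C, ⟪v, z - x⟫ ≤ 0}

/-- Minimal exposed face of `C` generated by `x`: the intersection of all exposed faces of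
`C` containing `x`. -/
def GEx {n : ℕ} (C : Set (EuclideanSpace ℝ (Fin n))) (x : EuclideanSpace ℝ (Fin n)) :
    Set (EuclideanSpace ℝ (Fin n)) :=
  ⋂₀ {F | IsExposed ℝ C F ∧ x ∈ F}

/-- for a nonempty closed convex `C` and `x, y ∈ C`,
`N_C(x) ⊆ N_C(y)` iff `G_ex(y) ⊆ G_ex(x)`. -/
theorem stmt9 {n : ℕ} (C : Set (EuclideanSpace ℝ (Fin n)))
    (hCne : C.Nonempty) (hCcl : IsClosed C) (hCcv : Convex ℝ C)
    (x y : EuclideanSpace ℝ (Fin n)) (hx : x ∈ C) (hy : y ∈ C) :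
    NCone C x ⊆ NCone C y ↔ GEx C y ⊆ GEx C x := by
  constructor
  · -- N(x) ⊆ N(y) → GEx y ⊆ GEx x
    intro hN z hz
    intro F hF
    obtain ⟨hFexp, hxF⟩ := hF
    obtain ⟨l, hl⟩ := hFexp ⟨x, hxF⟩
    set v := (InnerProductSpace.toDual ℝ (EuclideanSpace ℝ (Fin n))).symm l with hv
    have hvz : ∀ w, ⟪v, w⟫ = l w := fun w =>
      InnerProductSpace.toDual_symm_apply
    -- x ∈ F gives v ∈ NCone C x
    have hvNx : v ∈ NCone C x := by
      intro w hw
      have : l w ≤ l x := by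
        rw [hl] at hxF
        exact hxF.2 w hw
      have : ⟪v, w⟫ - ⟪v, x⟫ ≤ 0 := by rw [hvz, hvz]; linarith
      rwa [← inner_sub_right] at this
    have hvNy : v ∈ NCone C y := hN hvNx
    -- y ∈ F
    have hyF : y ∈ F := by
      rw [hl]
      refine ⟨hy, fun w hw => ?_⟩
      have := hvNy w hw
      rw [inner_sub_right] at this
      rw [← hvz, ← hvz]
      linarith
    exact hz F ⟨hFexp, hyF⟩
  · -- GEx y ⊆ GEx x → N(x) ⊆ N(y)
    intro hG v hv
    set F : Set (EuclideanSpace ℝ (Fin n)) :=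
      {z ∈ C | ∀ w ∈ C, (innerSL ℝ v) w ≤ (innerSL ℝ v) z} with hF
    have hFexp : IsExposed ℝ C F := fun _ => ⟨innerSL ℝ v, rfl⟩
    have hxF : x ∈ F := by
      refine ⟨hx, fun w hw => ?_⟩
      have := hv w hw
      rw [inner_sub_right] at this
      simpa using this
    have hyG : y ∈ GEx C y := fun F hF => hF.2
    have hyF : y ∈ F := hG hyG F ⟨hFexp, hxF⟩
    intro w hw
    have := hyF.2 w hw
    simp only [innerSL_apply_apply] at this
    rw [inner_sub_right]
    linarith
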